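/- For all s, t ∈ F \ F_{q^2} with s ∉ {t, t^(q^2)}, the element ρ̂(s,t) is nonzero, satisfies ρ̂(s,t)^(q^2) = ρ̂(s,t) (i.e., ρ̂(s,t) ∈ F_{q^2}), and there exists α ∈ F_{q^2} with ρ̂(s,t) = α + α^2; in particular ρ̂(s,t) has absolute trace 0, i.e., ρ̂(s,t) ∈ T₀(q^2). -/

import Mathlib

/-- The cross-ratio type quantity ρ(s,t) of Hollmann–Xiang. -/
def rhoPW {F : Type*} [Field F] (q : ℕ) (s t : F) : F :=
  ((s + t) * (s ^ q ^ 2 + t ^ q ^ 2)) / ((s + t ^ q ^ 2) * (s ^ q ^ 2 + t))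

/-- ρ̂(s,t) = 1/(ρ(s,t) + ρ(s,t)⁻¹). -/
def rhoHatPW {F : Type*} [Field F] (q : ℕ) (s t : F) : F :=
  (rhoPW q s t + (rhoPW q s t)⁻¹)⁻¹

set_option maxHeartbeats 1600000 in
theorem stmt_2 (h q : ℕ) (hh : 1 ≤ h) (hq : q = 2 ^ h)
    (F : Type*) [Field F] [Fintype F] (hF : Fintype.card F = q ^ 4)
    (s t : F) (hs : s ^ q ^ 2 ≠ s) (ht : t ^ q ^ 2 ≠ t)
    (h1 : s ≠ t) (h2 : s ≠ t ^ q ^ 2) :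
    rhoHatPW q s t ≠ 0 ∧
    (rhoHatPW q s t) ^ q ^ 2 = rhoHatPW q s t ∧
    (∃ α : F, α ^ q ^ 2 = α ∧ rhoHatPW q s t = α + α ^ 2) ∧
    ∑ i ∈ Finset.range (2 * h), (rhoHatPW q s t) ^ 2 ^ i = 0 := by
  -- characteristic 2
  have h2z : (2 : F) = 0 := by
    have hc : ((Fintype.card F : ℕ) : F) = 0 := FiniteField.cast_card_eq_zero F
    rw [hF, hq] at hc
    push_cast at hc
    have : (2 : F) ^ (h * 4) = 0 := by rw [pow_mul]; exact hc
    exact pow_eq_zero_iff (by positivity) |>.mp this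
  haveI : CharP F 2 := by
    have := CharP.ringChar_of_prime_eq_zero Nat.prime_two h2z
    exact this ▸ ringChar.charP F
  have hq2 : q ^ 2 = 2 ^ (2 * h) := by
    rw [hq, ← pow_mul, mul_comm]
  have hfrob : ∀ x y : F, (x + y) ^ q ^ 2 = x ^ q ^ 2 + y ^ q ^ 2 := by
    intro x y; rw [hq2]; exact add_pow_char_pow ..
  have hpow4 : ∀ x : F, (x ^ q ^ 2) ^ q ^ 2 = x := by
    intro x
    rw [← pow_mul, show q ^ 2 * q ^ 2 = q ^ 4 by ring, ← hF, FiniteField.pow_card]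
  have hadd_ne : ∀ x y : F, x ≠ y → x + y ≠ 0 := by
    intro x y hxy
    rw [← CharTwo.sub_eq_add]
    exact sub_ne_zero.mpr hxy
  have hadd_eq : ∀ x y : F, x + y = 0 → x = y := by
    intro x y hxy
    rw [← CharTwo.sub_eq_add] at hxy
    exact sub_eq_zero.mp hxy
  set S := s ^ q ^ 2 with hS
  set T := t ^ q ^ 2 with hT
  have n1 : s + t ≠ 0 := hadd_ne _ _ h1
  have n2 : S + T ≠ 0 := hadd_ne _ _ (by
    intro hST
    apply h1
    rw [← hpow4 s, ← hS, hST, hT, hpow4])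
  have n3 : s + T ≠ 0 := hadd_ne _ _ h2
  have n4 : S + t ≠ 0 := hadd_ne _ _ (by
    intro hSt
    apply h2
    rw [← hpow4 s, ← hS, hSt, hT])
  set ρ := rhoPW q s t with hρ
  have hρdef : ρ = ((s + t) * (S + T)) / ((s + T) * (S + t)) := rfl
  have hρ0 : ρ ≠ 0 := by
    rw [hρdef]
    exact div_ne_zero (mul_ne_zero n1 n2) (mul_ne_zero n3 n4)
  have hρ1 : ρ ≠ 1 := by
    intro hone
    rw [hρdef, div_eq_one_iff_eq (mul_ne_zero n3 n4)] at hone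
    have key : (s + S) * (t + T) = 0 := by
      have h2' : (2 : F) = 0 := h2z
      linear_combination hone + (s * t + S * T) * h2'
    rcases mul_eq_zero.mp key with hk | hk
    · exact hs (hadd_eq _ _ hk).symm
    · exact ht (hadd_eq _ _ hk).symm
  have hρp1 : ρ + 1 ≠ 0 := hadd_ne _ _ hρ1
  -- ρ is fixed by Frobenius
  have hρfix : ρ ^ q ^ 2 = ρ := by
    rw [hρdef, div_pow, mul_pow, mul_pow, hfrob, hfrob, hfrob, hfrob,
      hpow4, hpow4, ← hS, ← hT]
    ring
  -- the key rewriting of rhoHat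
  have hsq : (ρ + 1) ^ 2 = ρ ^ 2 + 1 := by
    linear_combination ρ * h2z
  have hsum : ρ + ρ⁻¹ = (ρ + 1) ^ 2 / ρ := by
    rw [hsq]
    field_simp
  have hhat : rhoHatPW q s t = ρ / (ρ + 1) ^ 2 := by
    unfold rhoHatPW
    rw [← hρ, hsum, inv_div]
  have hsqne : (ρ + 1) ^ 2 ≠ 0 := pow_ne_zero _ hρp1
  have hhat0 : rhoHatPW q s t ≠ 0 := by
    rw [hhat]; exact div_ne_zero hρ0 hsqne
  set α : F := ρ / (ρ + 1) with hα
  have hα0 : α ^ q ^ 2 = α := by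
    rw [hα, div_pow, hρfix, hfrob, hρfix, one_pow]
  have hαeq : rhoHatPW q s t = α + α ^ 2 := by
    rw [hhat, hα, div_pow]
    field_simp
    ring_nf
    linear_combination (-ρ) * h2z
  refine ⟨hhat0, ?_, ⟨α, hα0, hαeq⟩, ?_⟩
  · rw [hhat, div_pow, hρfix, ← pow_mul, mul_comm, pow_mul, hfrob, hρfix, one_pow]
  · have hterm : ∀ i, rhoHatPW q s t ^ 2 ^ i
        = (fun i => α ^ 2 ^ i) (i + 1) - (fun i => α ^ 2 ^ i) i := by
      intro i
      simp only []
      rw [CharTwo.sub_eq_add, hαeq, add_pow_char_pow, ← pow_mul,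
        show 2 * 2 ^ i = 2 ^ (i + 1) from (pow_succ' 2 i).symm, add_comm]
    calc ∑ i ∈ Finset.range (2 * h), rhoHatPW q s t ^ 2 ^ i
        = ∑ i ∈ Finset.range (2 * h), ((fun i => α ^ 2 ^ i) (i + 1) - (fun i => α ^ 2 ^ i) i) := by
          exact Finset.sum_congr rfl fun i _ => hterm i
      _ = α ^ 2 ^ (2 * h) - α ^ 2 ^ 0 := by
          exact Finset.sum_range_sub (fun i => α ^ 2 ^ i) (2 * h)
      _ = 0 := by rw [← hq2, hα0, pow_zero, pow_one, sub_self]
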